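/- Let f_n, f be non-increasing non-negative càdlàg functions on [0,∞) such that f_n → f in the Skorokhod (J1) sense. Set t_n = inf{s ≥ 0 : f_n(s) = 0} and t = inf{s ≥ 0 : f(s) = 0}, and assume t < ∞ and t_n → t. If f(t−) = 0, then f_n(t_n−) → 0. (Here h(s−) denotes the left limit of h at s > 0, with the convention h(0−) := h(0).) -/

import Mathlib

open MeasureTheory Filter Set
open scoped ENNReal NNReal Topology

/-- A function is càdlàg on `[0,∞)`: right-continuous at every `t ≥ 0` and
with left limits at every `t > 0`. -/
def Cadlag (f : ℝ → ℝ) : Prop :=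
  (∀ t : ℝ, 0 ≤ t → ContinuousWithinAt f (Set.Ici t) t) ∧
  ∀ t : ℝ, 0 < t → ∃ l : ℝ, Filter.Tendsto f (nhdsWithin t (Set.Iio t)) (nhds l)

/-- First hitting time of `0`: `T₀(h) = inf{t ≥ 0 : h(t) = 0}`, in `[0,∞]`. -/
noncomputable def hit0 (h : ℝ → ℝ) : ℝ≥0∞ :=
  sInf ((fun v : ℝ => ENNReal.ofReal v) '' {t : ℝ | 0 ≤ t ∧ h t = 0})

/-- Skorokhod (J1) convergence of càdlàg functions from `[0,∞)` to `ℝ`: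
there exist continuous strictly increasing bijections `λₙ` of `[0,∞)` such that
`λₙ → id` and `hₙ ∘ λₙ → h` uniformly on every compact set. -/
def SkorokhodTendsto (h : ℕ → ℝ → ℝ) (l : ℝ → ℝ) : Prop :=
  ∃ lam : ℕ → ℝ → ℝ,
    (∀ n, ContinuousOn (lam n) (Set.Ici 0) ∧ StrictMonoOn (lam n) (Set.Ici 0) ∧
      Set.BijOn (lam n) (Set.Ici 0) (Set.Ici 0)) ∧
    (∀ T : ℝ, 0 < T →
      TendstoUniformlyOn (fun n t => lam n t) id atTop (Set.Icc 0 T)) ∧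
    (∀ T : ℝ, 0 < T →
      TendstoUniformlyOn (fun n t => h n (lam n t)) l atTop (Set.Icc 0 T))

/-- Left limit of `h` at `s`, with the convention `h(0−) := h(0)` (and the same
junk convention for `s < 0`). -/
noncomputable def leftLimC (h : ℝ → ℝ) (s : ℝ) : ℝ :=
  if s ≤ 0 then h 0 else Function.leftLim h s

lemma leftLimC_le_of_lt (h : ℝ → ℝ)
    (hmono : ∀ s u : ℝ, 0 ≤ s → s ≤ u → h u ≤ h s)
    (hcad : Cadlag h) {s u : ℝ} (hs : 0 ≤ s) (hsu : s < u) :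
    leftLimC h u ≤ h s := by
  have hu : 0 < u := lt_of_le_of_lt hs hsu
  rw [leftLimC, if_neg (not_le.mpr hu)]
  obtain ⟨l, hl⟩ := hcad.2 u hu
  have hne : (𝓝[<] u).NeBot := by exact nhdsLT_neBot u
  rw [leftLim_eq_of_tendsto hl]
  refine le_of_tendsto hl ?_
  filter_upwards [Ioo_mem_nhdsLT hsu] with x hx
  exact hmono s x hs hx.1.le

lemma leftLimC_nonneg (h : ℝ → ℝ)
    (hnn : ∀ s : ℝ, 0 ≤ s → 0 ≤ h s) (hcad : Cadlag h) (u : ℝ) :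
    0 ≤ leftLimC h u := by
  rw [leftLimC]
  split_ifs with hu
  · exact hnn 0 le_rfl
  · push_neg at hu
    obtain ⟨l, hl⟩ := hcad.2 u hu
    have hne : (𝓝[<] u).NeBot := nhdsLT_neBot u
    rw [leftLim_eq_of_tendsto hl]
    refine ge_of_tendsto hl ?_
    filter_upwards [Ioo_mem_nhdsLT hu] with x hx
    exact hnn x hx.1.le

lemma leftLimC_le_zero (h : ℝ → ℝ)
    (hmono : ∀ s u : ℝ, 0 ≤ s → s ≤ u → h u ≤ h s)
    (hcad : Cadlag h) (u : ℝ) : leftLimC h u ≤ h 0 := by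
  rcases le_or_gt u 0 with hu | hu
  · rw [leftLimC, if_pos hu]
  · exact leftLimC_le_of_lt h hmono hcad le_rfl hu

/-- if non-increasing non-negative càdlàg `fₙ → f` in the Skorokhod
sense, `tₙ = inf{s ≥ 0 : fₙ(s) = 0} → t = inf{s ≥ 0 : f(s) = 0} < ∞`,
and `f(t−) = 0`, then `fₙ(tₙ−) → 0`. -/
theorem left_limit_at_absorption_convergence_zero_case
    (fseq : ℕ → ℝ → ℝ) (f : ℝ → ℝ)
    (hseq_nonneg : ∀ n, ∀ s : ℝ, 0 ≤ s → 0 ≤ fseq n s)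
    (hseq_mono : ∀ n, ∀ s u : ℝ, 0 ≤ s → s ≤ u → fseq n u ≤ fseq n s)
    (hseq_cadlag : ∀ n, Cadlag (fseq n))
    (hnonneg : ∀ s : ℝ, 0 ≤ s → 0 ≤ f s)
    (hmono : ∀ s u : ℝ, 0 ≤ s → s ≤ u → f u ≤ f s)
    (hcadlag : Cadlag f)
    (hconv : SkorokhodTendsto fseq f)
    (ht_fin : hit0 f ≠ ∞)
    (ht_conv : Filter.Tendsto (fun n => hit0 (fseq n)) atTop (nhds (hit0 f)))
    (hzero : leftLimC f ((hit0 f).toReal) = 0) :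
    Filter.Tendsto (fun n => leftLimC (fseq n) ((hit0 (fseq n)).toReal)) atTop
      (nhds 0) := by
  obtain ⟨lam, hlam_prop, hlam_conv, hf_conv⟩ := hconv
  have hlam0 : ∀ n, lam n 0 = 0 := by
    intro n
    obtain ⟨hc, hm, hb⟩ := hlam_prop n
    obtain ⟨s, hs, hls⟩ := hb.surjOn (Set.mem_Ici.mpr le_rfl)
    rcases eq_or_lt_of_le (Set.mem_Ici.mp hs : (0:ℝ) ≤ s) with rfl | hs'
    · exact hls
    · have h1 : lam n 0 < lam n s := hm (Set.mem_Ici.mpr le_rfl) hs hs'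
      have h0 : (0:ℝ) ≤ lam n 0 := hb.mapsTo (Set.mem_Ici.mpr le_rfl)
      rw [hls] at h1
      linarith
  set t : ℝ := (hit0 f).toReal with htdef
  have ht0 : 0 ≤ t := ENNReal.toReal_nonneg
  have htn : Tendsto (fun n => (hit0 (fseq n)).toReal) atTop (𝓝 t) :=
    (ENNReal.tendsto_toReal ht_fin).comp ht_conv
  rw [NormedAddCommGroup.tendsto_nhds_zero]
  intro ε hε
  have key : ∀ n u, ‖leftLimC (fseq n) u‖ = leftLimC (fseq n) u := fun n u => by
    rw [Real.norm_eq_abs]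
    exact abs_of_nonneg (leftLimC_nonneg _ (hseq_nonneg n) (hseq_cadlag n) u)
  rcases eq_or_lt_of_le ht0 with ht | ht
  · -- t = 0
    have hf0 : f 0 = 0 := by
      rw [leftLimC, if_pos (le_of_eq ht.symm)] at hzero
      exact hzero
    have hconv0 : Tendsto (fun n => fseq n (lam n 0)) atTop (𝓝 (f 0)) :=
      (hf_conv 1 one_pos).tendsto_at ⟨le_rfl, zero_le_one⟩
    have hcz : Tendsto (fun n => fseq n 0) atTop (𝓝 0) := by
      rw [hf0] at hconv0
      refine hconv0.congr fun n => by rw [hlam0 n]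
    filter_upwards [hcz.eventually_lt_const hε] with n hn
    rw [key]
    exact lt_of_le_of_lt (leftLimC_le_zero _ (hseq_mono n) (hseq_cadlag n) _) hn
  · -- t > 0
    have hne : (𝓝[<] t).NeBot := by infer_instance
    have hleft : Tendsto f (𝓝[<] t) (𝓝 0) := by
      obtain ⟨l, hl⟩ := hcadlag.2 t ht
      have heq : Function.leftLim f t = l := leftLim_eq_of_tendsto hl
      rw [leftLimC, if_neg (not_le.mpr ht), heq] at hzero
      rwa [hzero] at hl
    obtain ⟨s₀, hs₀f, hs₀mem⟩ := ((hleft.eventually (Iio_mem_nhds (half_pos hε))).and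
      (eventually_of_mem (Ioo_mem_nhdsLT ht) fun x hx => hx)).exists
    -- hs₀f : f s₀ < ε/2, hs₀mem : s₀ ∈ Ioo 0 t
    set m : ℝ := (s₀ + t) / 2 with hm
    have hs₀m : s₀ < m := by simp only [hm]; linarith [hs₀mem.2]
    have hmt : m < t := by simp only [hm]; linarith [hs₀mem.2]
    have hlamconv : Tendsto (fun n => lam n s₀) atTop (𝓝 s₀) := by
      have := (hlam_conv t ht).tendsto_at ⟨hs₀mem.1.le, hs₀mem.2.le⟩
      simpa using this
    have hfc : Tendsto (fun n => fseq n (lam n s₀)) atTop (𝓝 (f s₀)) :=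
      (hf_conv t ht).tendsto_at ⟨hs₀mem.1.le, hs₀mem.2.le⟩
    filter_upwards [hlamconv.eventually_lt_const hs₀m, htn.eventually_const_lt hmt,
      hfc.eventually_lt_const (hs₀f.trans (half_lt_self hε))] with n h1 h2 h3
    rw [key]
    have hlnn : 0 ≤ lam n s₀ := (hlam_prop n).2.2.mapsTo (Set.mem_Ici.mpr hs₀mem.1.le)
    have hlt : lam n s₀ < (hit0 (fseq n)).toReal := h1.trans h2
    exact lt_of_le_of_lt
      (leftLimC_le_of_lt _ (hseq_mono n) (hseq_cadlag n) hlnn hlt) h3
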